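/- Let x̂ ≥ 0 with d_i(x̂) > 0 for all i be a fixed point of the EM operator, i.e. f_j(x̂) = 1 for every j with x̂_j > 0. Then for every x > 0 one has I(x̂, x) − I(x̂, P(x)) ≥ I_A^b(x) − I_A^b(x̂). -/

import Mathlib

open Finset Filter Topology

noncomputable def dd {M N : ℕ} (A : Fin M → Fin N → ℝ) (x : Fin N → ℝ) (i : Fin M) : ℝ :=
  ∑ j, A i j * x j

noncomputable def ff {M N : ℕ} (A : Fin M → Fin N → ℝ) (b : Fin M → ℝ) (x : Fin N → ℝ) (j : Fin N) : ℝ :=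
  ∑ i, A i j * b i / dd A x i

noncomputable def EMop {M N : ℕ} (A : Fin M → Fin N → ℝ) (b : Fin M → ℝ) (x : Fin N → ℝ) : Fin N → ℝ :=
  fun j => x j * ff A b x j

noncomputable def KL {N : ℕ} (u v : Fin N → ℝ) : ℝ :=
  (∑ j, u j * Real.log (u j / v j)) - ∑ j, (u j - v j)

noncomputable def IAb {M N : ℕ} (A : Fin M → Fin N → ℝ) (b : Fin M → ℝ) (x : Fin N → ℝ) : ℝ :=
  (∑ i, b i * Real.log (b i / dd A x i)) - ∑ i, (b i - dd A x i)

noncomputable def finSup0 {ι : Type*} (s : Finset ι) (g : ι → ℝ) : ℝ :=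
  if h : s.Nonempty then s.sup' h g else 0

noncomputable def finInf0 {ι : Type*} (s : Finset ι) (g : ι → ℝ) : ℝ :=
  if h : s.Nonempty then s.inf' h g else 0

/-- Jensen's inequality for the logarithm with finitely many weights. -/
lemma jensen_log {ι : Type*} [Fintype ι] (w t : ι → ℝ)
    (hw : ∀ i, 0 ≤ w i) (ht : ∀ i, 0 < t i) (hsum : ∑ i, w i = 1) :
    ∑ i, w i * Real.log (t i) ≤ Real.log (∑ i, w i * t i) := by
  set S := ∑ i, w i * t i with hS
  have hS0 : 0 < S := by
    obtain ⟨i, _, hi⟩ := Finset.exists_ne_zero_of_sum_ne_zero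
      (by rw [hsum]; norm_num : ∑ i : ι, w i ≠ 0)
    have hwi : 0 < w i := lt_of_le_of_ne (hw i) (Ne.symm hi)
    calc (0:ℝ) < w i * t i := mul_pos hwi (ht i)
      _ ≤ S := Finset.single_le_sum
          (fun k _ => mul_nonneg (hw k) (ht k).le) (Finset.mem_univ i)
  have key : ∀ i, w i * Real.log (t i) ≤ w i * (t i / S - 1) + w i * Real.log S := by
    intro i
    have h1 : Real.log (t i) = Real.log (t i / S) + Real.log S := by
      rw [Real.log_div (ht i).ne' hS0.ne']; ring
    rw [h1, mul_add]
    have := mul_le_mul_of_nonneg_left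
      (Real.log_le_sub_one_of_pos (div_pos (ht i) hS0)) (hw i)
    linarith
  calc ∑ i, w i * Real.log (t i)
      ≤ ∑ i, (w i * (t i / S - 1) + w i * Real.log S) :=
        Finset.sum_le_sum (fun i _ => key i)
    _ = (∑ i, w i * t i) / S - (∑ i, w i) + (∑ i, w i) * Real.log S := by
        rw [Finset.sum_add_distrib, ← Finset.sum_mul, Finset.sum_div]
        congr 1
        rw [← Finset.sum_sub_distrib]
        exact Finset.sum_congr rfl fun i _ => by ring
    _ = Real.log S := by
        rw [← hS, div_self hS0.ne', hsum]; ring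

theorem stmt_7
    (M N : ℕ) (hM : 0 < M) (hN : 0 < N)
    (A : Fin M → Fin N → ℝ) (b : Fin M → ℝ)
    (hA : ∀ i j, 0 ≤ A i j)
    (hcol : ∀ j, ∑ i, A i j = 1)
    (hrow : ∀ i, ∃ j, 0 < A i j)
    (hb : ∀ i, 0 < b i)
    (xh : Fin N → ℝ) (hxh : ∀ j, 0 ≤ xh j)
    (hd : ∀ i, 0 < dd A xh i)
    (hfix : ∀ j, 0 < xh j → ff A b xh j = 1) :
    ∀ x : Fin N → ℝ, (∀ j, 0 < x j) →
      KL xh x - KL xh (EMop A b x) ≥ IAb A b x - IAb A b xh := by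
  intro x hx
  -- positivity of d_i(x)
  have hdx : ∀ i, 0 < dd A x i := by
    intro i
    obtain ⟨j, hj⟩ := hrow i
    exact Finset.sum_pos' (fun k _ => mul_nonneg (hA i k) (hx k).le)
      ⟨j, Finset.mem_univ j, mul_pos hj (hx j)⟩
  -- positivity of f_j(x)
  have hfpos : ∀ j, 0 < ff A b x j := by
    intro j
    obtain ⟨i, _, hi⟩ := Finset.exists_ne_zero_of_sum_ne_zero
      (by rw [hcol j]; norm_num : ∑ i : Fin M, A i j ≠ 0)
    have hAij : 0 < A i j := lt_of_le_of_ne (hA i j) (Ne.symm hi)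
    exact Finset.sum_pos'
      (fun k _ => div_nonneg (mul_nonneg (hA k j) (hb k).le) (hdx k).le)
      ⟨i, Finset.mem_univ i, div_pos (mul_pos hAij (hb i)) (hdx i)⟩
  -- swapping sums: ∑ y_j f_j(y) = ∑ b_i
  have swap : ∀ (y : Fin N → ℝ), (∀ i, dd A y i ≠ 0) →
      ∑ j, y j * ff A b y j = ∑ i, b i := by
    intro y hy
    simp only [ff, Finset.mul_sum]
    rw [Finset.sum_comm]
    refine Finset.sum_congr rfl fun i _ => ?_
    have h1 : ∑ j, y j * (A i j * b i / dd A y i)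
        = (∑ j, A i j * y j) * (b i / dd A y i) := by
      rw [Finset.sum_mul]
      exact Finset.sum_congr rfl fun j _ => by ring
    rw [h1, show (∑ j, A i j * y j) = dd A y i from rfl, mul_comm,
      div_mul_cancel₀ _ (hy i)]
  -- column sums: ∑ d_i(y) = ∑ y_j
  have colsum : ∀ y : Fin N → ℝ, ∑ i, dd A y i = ∑ j, y j := by
    intro y
    simp only [dd]
    rw [Finset.sum_comm]
    refine Finset.sum_congr rfl fun j _ => ?_
    rw [← Finset.sum_mul, hcol j, one_mul]
  -- total mass of fixed point
  have hsum_xh : ∑ j, xh j = ∑ i, b i := by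
    have h1 : ∀ j, xh j = xh j * ff A b xh j := by
      intro j
      rcases eq_or_lt_of_le (hxh j) with h | h
      · simp [← h]
      · rw [hfix j h, mul_one]
    rw [Finset.sum_congr rfl (fun j _ => h1 j), swap xh (fun i => (hd i).ne')]
  -- Jensen step, termwise in j
  have jkey : ∀ j, ∑ i, xh j * (A i j * b i / dd A xh i) * Real.log (dd A xh i / dd A x i)
      ≤ xh j * Real.log (ff A b x j) := by
    intro j
    rcases eq_or_lt_of_le (hxh j) with h | h
    · simp [← h]
    · have hw : ∀ i, 0 ≤ A i j * b i / dd A xh i :=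
        fun i => div_nonneg (mul_nonneg (hA i j) (hb i).le) (hd i).le
      have ht : ∀ i, 0 < dd A xh i / dd A x i := fun i => div_pos (hd i) (hdx i)
      have hwsum : ∑ i, A i j * b i / dd A xh i = 1 := hfix j h
      have hwt : ∑ i, (A i j * b i / dd A xh i) * (dd A xh i / dd A x i)
          = ff A b x j := by
        refine Finset.sum_congr rfl fun i _ => ?_
        rw [div_mul_div_comm, mul_comm (dd A xh i) (dd A x i),
          mul_div_mul_right _ _ (hd i).ne']
      have := jensen_log (fun i => A i j * b i / dd A xh i)
        (fun i => dd A xh i / dd A x i) hw ht hwsum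
      rw [hwt] at this
      calc ∑ i, xh j * (A i j * b i / dd A xh i) * Real.log (dd A xh i / dd A x i)
          = xh j * ∑ i, (A i j * b i / dd A xh i) * Real.log (dd A xh i / dd A x i) := by
            rw [Finset.mul_sum]; exact Finset.sum_congr rfl fun i _ => by ring
        _ ≤ xh j * Real.log (ff A b x j) := mul_le_mul_of_nonneg_left this h.le
  -- swap the double sum
  have swap2 : ∑ j, ∑ i, xh j * (A i j * b i / dd A xh i) * Real.log (dd A xh i / dd A x i)
      = ∑ i, b i * Real.log (dd A xh i / dd A x i) := by
    rw [Finset.sum_comm]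
    refine Finset.sum_congr rfl fun i _ => ?_
    have h1 : ∑ j, xh j * (A i j * b i / dd A xh i) * Real.log (dd A xh i / dd A x i)
        = (∑ j, A i j * xh j) * (b i / dd A xh i * Real.log (dd A xh i / dd A x i)) := by
      rw [Finset.sum_mul]
      exact Finset.sum_congr rfl fun j _ => by ring
    rw [h1, show (∑ j, A i j * xh j) = dd A xh i from rfl, mul_comm,
      mul_right_comm, div_mul_cancel₀ _ (hd i).ne']
  -- central inequality
  have key : ∑ i, b i * Real.log (dd A xh i / dd A x i)
      ≤ ∑ j, xh j * Real.log (ff A b x j) := by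
    rw [← swap2]
    exact Finset.sum_le_sum fun j _ => jkey j
  -- identity for the KL side
  have E1 : KL xh x - KL xh (EMop A b x)
      = (∑ j, xh j * Real.log (ff A b x j)) + (∑ j, x j) - (∑ i, b i) := by
    have logterm : ∀ j, xh j * Real.log (xh j / x j) - xh j * Real.log (xh j / EMop A b x j)
        = xh j * Real.log (ff A b x j) := by
      intro j
      rcases eq_or_lt_of_le (hxh j) with h | h
      · simp [← h]
      · have hP : xh j / EMop A b x j = (xh j / x j) / ff A b x j := by
          show xh j / (x j * ff A b x j) = _
          rw [div_div]
        rw [hP, Real.log_div (div_pos h (hx j)).ne' (hfpos j).ne']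
        ring
    have hsum1 : ∑ j, (xh j * Real.log (xh j / x j) - xh j * Real.log (xh j / EMop A b x j))
        = ∑ j, xh j * Real.log (ff A b x j) :=
      Finset.sum_congr rfl fun j _ => logterm j
    have hP2 : ∑ j, EMop A b x j = ∑ i, b i := by
      rw [show (∑ j, EMop A b x j) = ∑ j, x j * ff A b x j from rfl,
        swap x (fun i => (hdx i).ne')]
    rw [Finset.sum_sub_distrib] at hsum1
    have ha : ∑ j, (xh j - x j) = ∑ j, xh j - ∑ j, x j := Finset.sum_sub_distrib _ _
    have hb2 : ∑ j, (xh j - EMop A b x j) = ∑ j, xh j - ∑ i, b i := by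
      rw [Finset.sum_sub_distrib, hP2]
    simp only [KL]
    rw [ha, hb2]
    linarith [hsum1]
  -- identity for the I_A^b side
  have E2 : IAb A b x - IAb A b xh
      = (∑ i, b i * Real.log (dd A xh i / dd A x i)) + (∑ j, x j) - (∑ i, b i) := by
    have logterm : ∀ i, b i * Real.log (b i / dd A x i) - b i * Real.log (b i / dd A xh i)
        = b i * Real.log (dd A xh i / dd A x i) := by
      intro i
      rw [Real.log_div (hb i).ne' (hdx i).ne', Real.log_div (hb i).ne' (hd i).ne',
        Real.log_div (hd i).ne' (hdx i).ne']
      ring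
    have hsum1 : ∑ i, (b i * Real.log (b i / dd A x i) - b i * Real.log (b i / dd A xh i))
        = ∑ i, b i * Real.log (dd A xh i / dd A x i) :=
      Finset.sum_congr rfl fun i _ => logterm i
    simp only [IAb]
    rw [Finset.sum_sub_distrib] at hsum1
    rw [show ∑ i, (b i - dd A x i) = ∑ i, b i - ∑ i, dd A x i from Finset.sum_sub_distrib _ _,
      show ∑ i, (b i - dd A xh i) = ∑ i, b i - ∑ i, dd A xh i from Finset.sum_sub_distrib _ _,
      colsum x, colsum xh]
    linarith [hsum1, hsum_xh]
  linarith [key, E1, E2]
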